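/- Let c : ℝ → ℝ be continuous, (Bohr) almost periodic, with inf_{t∈ℝ} c(t) > 0, and let f : ℝ → ℝ be pseudo almost periodic. Then the unique bounded solution x(t) = ∫_{−∞}^{t} exp(−∫_{s}^{t} c(u) du) · f(s) ds of x′ = −c(t)x + f(t) is pseudo almost periodic. -/

import Mathlib

open MeasureTheory

/-- A function `g : ℝ → ℝ` is (Bohr) almost periodic if it is continuous and for every
`ε > 0` there exists `l > 0` such that every interval of length `l` contains a number `τ`
with `|g (t + τ) - g t| < ε` for all `t`. -/
def AlmostPeriodic (g : ℝ → ℝ) : Prop :=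
  Continuous g ∧ ∀ ε : ℝ, 0 < ε → ∃ l : ℝ, 0 < l ∧ ∀ a : ℝ,
    ∃ τ ∈ Set.Icc a (a + l), ∀ t : ℝ, |g (t + τ) - g t| < ε

/-- `φ : ℝ → ℝ` belongs to `PAP₀(ℝ)` if it is bounded, continuous and
`(1/(2r)) ∫_{-r}^{r} |φ(s)| ds → 0` as `r → ∞`. -/
def PAPZero (φ : ℝ → ℝ) : Prop :=
  (∃ C : ℝ, ∀ t : ℝ, |φ t| ≤ C) ∧ Continuous φ ∧
    Filter.Tendsto (fun r : ℝ => (1 / (2 * r)) * ∫ s in (-r)..r, |φ s|)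
      Filter.atTop (nhds 0)

/-- `f : ℝ → ℝ` is pseudo almost periodic if `f = g + φ` with `g` almost periodic and
`φ ∈ PAP₀(ℝ)`. -/
def PseudoAlmostPeriodic (f : ℝ → ℝ) : Prop :=
  ∃ g φ : ℝ → ℝ, AlmostPeriodic g ∧ PAPZero φ ∧ f = g + φ


lemma ap_bounded {g : ℝ → ℝ} (hg : AlmostPeriodic g) :
    ∃ C : ℝ, 0 ≤ C ∧ ∀ t, |g t| ≤ C := by
  obtain ⟨hcont, hap⟩ := hg
  obtain ⟨l, hl, hT⟩ := hap 1 one_pos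
  obtain ⟨M, hM⟩ := (isCompact_Icc (a := (0:ℝ)) (b := l)).exists_bound_of_continuousOn
    hcont.continuousOn
  simp only [Real.norm_eq_abs] at hM
  refine ⟨M + 1, ?_, fun t => ?_⟩
  · have := hM 0 (by constructor <;> simp [hl.le])
    have h0 : (0:ℝ) ≤ |g 0| := abs_nonneg _
    linarith
  · obtain ⟨τ, hτmem, hτ⟩ := hT (-t)
    have h1 : t + τ ∈ Set.Icc (0:ℝ) l := by
      obtain ⟨h2, h3⟩ := hτmem; constructor <;> linarith
    have h2 := hM (t + τ) h1
    have h3 := hτ t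
    have h4 : |g t| ≤ |g (t + τ)| + |g (t + τ) - g t| := by
      calc |g t| = |g (t+τ) - (g (t+τ) - g t)| := by ring_nf
        _ ≤ |g (t+τ)| + |g (t+τ) - g t| := abs_sub _ _
    linarith

lemma ap_unifcont {g : ℝ → ℝ} (hg : AlmostPeriodic g) {ε : ℝ} (hε : 0 < ε) :
    ∃ δ : ℝ, 0 < δ ∧ ∀ s t : ℝ, |s - t| ≤ δ → |g s - g t| ≤ ε := by
  obtain ⟨hcont, hap⟩ := hg
  obtain ⟨l, hl, hT⟩ := hap (ε/3) (by linarith)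
  have hK : IsCompact (Set.Icc (-1:ℝ) (l+1)) := isCompact_Icc
  have huc := hK.uniformContinuousOn_of_continuous hcont.continuousOn
  rw [Metric.uniformContinuousOn_iff] at huc
  obtain ⟨δ, hδ, hδ'⟩ := huc (ε/3) (by linarith)
  refine ⟨min (δ/2) 1, by positivity, fun s t hst => ?_⟩
  obtain ⟨τ, hτmem, hτ⟩ := hT (-t)
  obtain ⟨hm1, hm2⟩ := hτmem
  have hst1 : |s - t| ≤ 1 := le_trans hst (min_le_right _ _)
  have hst2 : |s - t| < δ := lt_of_le_of_lt (le_trans hst (min_le_left _ _)) (by linarith)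
  have habs := abs_le.1 hst1
  have h1 : t + τ ∈ Set.Icc (-1:ℝ) (l+1) := by constructor <;> linarith
  have h2 : s + τ ∈ Set.Icc (-1:ℝ) (l+1) := by constructor <;> linarith
  have h3 : dist (s + τ) (t + τ) < δ := by
    rw [Real.dist_eq]; simpa using hst2
  have h4 := hδ' _ h2 _ h1 h3
  rw [Real.dist_eq] at h4
  have h5 := hτ s
  have h6 := hτ t
  calc |g s - g t| = |(g s - g (s+τ)) + ((g (s+τ) - g (t+τ)) + (g (t+τ) - g t))| := by ring_nf
    _ ≤ |g s - g (s+τ)| + |(g (s+τ) - g (t+τ)) + (g (t+τ) - g t)| := abs_add_le _ _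
    _ ≤ |g s - g (s+τ)| + (|g (s+τ) - g (t+τ)| + |g (t+τ) - g t|) := by
        gcongr; exact abs_add_le _ _
    _ ≤ ε := by rw [abs_sub_comm (g s)] ; linarith

lemma ap_net {g : ℝ → ℝ} (hg : AlmostPeriodic g) {ε : ℝ} (hε : 0 < ε) :
    ∃ F : Finset ℝ, ∀ s : ℝ, ∃ τ ∈ F, ∀ t : ℝ, |g (t + s) - g (t + τ)| ≤ ε := by
  obtain ⟨l, hl, hT⟩ := hg.2 (ε/2) (by linarith)
  obtain ⟨δ, hδ, hδ'⟩ := ap_unifcont hg (show (0:ℝ) < ε/2 by linarith)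
  classical
  refine ⟨(Finset.range (⌊l/δ⌋₊ + 1)).image (fun k : ℕ => (k : ℝ) * δ), fun s => ?_⟩
  obtain ⟨σ, hσmem, hσ⟩ := hT (-s)
  obtain ⟨hm1, hm2⟩ := hσmem
  set y := s + σ with hy
  have hy0 : 0 ≤ y := by simp [hy]; linarith
  have hyl : y ≤ l := by simp [hy]; linarith
  set k := ⌊y/δ⌋₊ with hk
  have hk1 : (k:ℝ) * δ ≤ y := by
    rw [hk]
    have := Nat.floor_le (show 0 ≤ y/δ by positivity)
    calc (⌊y/δ⌋₊ : ℝ) * δ ≤ (y/δ) * δ := by gcongr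
      _ = y := by field_simp
  have hk2 : y < ((k:ℝ) + 1) * δ := by
    have h := Nat.lt_floor_add_one (y/δ)
    have h2 : y/δ < (k:ℝ)+1 := by rw [hk]; exact_mod_cast h
    calc y = (y/δ) * δ := by field_simp
      _ < ((k:ℝ)+1) * δ := mul_lt_mul_of_pos_right h2 hδ
  have hkmem : k ∈ Finset.range (⌊l/δ⌋₊ + 1) := by
    rw [Finset.mem_range, Nat.lt_add_one_iff]
    exact Nat.floor_le_floor (by gcongr)
  refine ⟨(k:ℝ) * δ, Finset.mem_image_of_mem (fun k : ℕ => (k:ℝ) * δ) hkmem, fun t => ?_⟩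
  have h1 := hσ (t + s)
  have h2 : |(t + y) - (t + (k:ℝ)*δ)| ≤ δ := by
    exact abs_le.2 ⟨by linarith, by linarith⟩
  have h3 := hδ' (t + y) (t + (k:ℝ)*δ) h2
  have he : t + s + σ = t + y := by rw [hy]; ring
  rw [he] at h1
  calc |g (t+s) - g (t + (k:ℝ)*δ)|
      = |-(g (t+y) - g (t+s)) + (g (t+y) - g (t+(k:ℝ)*δ))| := by ring_nf
    _ ≤ |-(g (t+y) - g (t+s))| + |g (t+y) - g (t+(k:ℝ)*δ)| := abs_add_le _ _
    _ ≤ ε := by rw [abs_neg]; linarith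

lemma ap_common {c g : ℝ → ℝ} (hc : AlmostPeriodic c) (hg : AlmostPeriodic g)
    {ε : ℝ} (hε : 0 < ε) :
    ∃ l : ℝ, 0 < l ∧ ∀ a : ℝ, ∃ τ ∈ Set.Icc a (a + l),
      (∀ t, |c (t + τ) - c t| ≤ ε) ∧ (∀ t, |g (t + τ) - g t| ≤ ε) := by
  classical
  obtain ⟨Fc, hFc⟩ := ap_net hc (show (0:ℝ) < ε/2 by linarith)
  obtain ⟨Fg, hFg⟩ := ap_net hg (show (0:ℝ) < ε/2 by linarith)
  set Cl : ℝ → ℝ → Set ℝ := fun u v =>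
    {s | (∀ t, |c (t + s) - c (t + u)| ≤ ε/2) ∧ (∀ t, |g (t + s) - g (t + v)| ≤ ε/2)}
    with hCl
  have hcover : ∀ s : ℝ, ∃ u ∈ Fc, ∃ v ∈ Fg, s ∈ Cl u v := by
    intro s
    obtain ⟨u, hu, hu'⟩ := hFc s
    obtain ⟨v, hv, hv'⟩ := hFg s
    exact ⟨u, hu, v, hv, hu', hv'⟩
  set rep : ℝ × ℝ → ℝ := fun p =>
    if h : (Cl p.1 p.2).Nonempty then h.choose else 0 with hrep
  have hrep_mem : ∀ p : ℝ × ℝ, (Cl p.1 p.2).Nonempty → rep p ∈ Cl p.1 p.2 := by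
    intro p hp; rw [hrep]; simp only [dif_pos hp]; exact hp.choose_spec
  by_cases hne : (Fc ×ˢ Fg).Nonempty
  · set M : ℝ := (Fc ×ˢ Fg).sup' hne (fun p => |rep p|) with hM
    have hM0 : 0 ≤ M := by
      obtain ⟨p, hp⟩ := hne
      exact le_trans (abs_nonneg (rep p)) (Finset.le_sup' (fun p => |rep p|) hp)
    refine ⟨2*M + 2, by linarith, fun a => ?_⟩
    set s : ℝ := a + M + 1 with hs
    obtain ⟨u, hu, v, hv, hsmem⟩ := hcover s
    have hnonempty : (Cl u v).Nonempty := ⟨s, hsmem⟩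
    set r : ℝ := rep (u, v) with hr
    have hrmem : r ∈ Cl u v := hrep_mem (u, v) hnonempty
    have hrM : |r| ≤ M := Finset.le_sup' (fun p => |rep p|) (Finset.mem_product.2 ⟨hu, hv⟩)
    have habs := abs_le.1 hrM
    refine ⟨s - r, ⟨by simp [hs]; linarith, by simp [hs]; linarith⟩, ?_, ?_⟩
    · intro t
      have h1 := hsmem.1 (t - r)
      have h2 := hrmem.1 (t - r)
      have he1 : t - r + s = t + (s - r) := by ring
      have he2 : t - r + r = t := by ring
      rw [he1] at h1; rw [he2] at h2
      calc |c (t + (s-r)) - c t| = |(c (t+(s-r)) - c (t-r+u)) + -(c t - c (t-r+u))| := by ring_nf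
        _ ≤ |c (t+(s-r)) - c (t-r+u)| + |-(c t - c (t-r+u))| := abs_add_le _ _
        _ ≤ ε := by rw [abs_neg]; linarith
    · intro t
      have h1 := hsmem.2 (t - r)
      have h2 := hrmem.2 (t - r)
      have he1 : t - r + s = t + (s - r) := by ring
      have he2 : t - r + r = t := by ring
      rw [he1] at h1; rw [he2] at h2
      calc |g (t + (s-r)) - g t| = |(g (t+(s-r)) - g (t-r+v)) + -(g t - g (t-r+v))| := by ring_nf
        _ ≤ |g (t+(s-r)) - g (t-r+v)| + |-(g t - g (t-r+v))| := abs_add_le _ _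
        _ ≤ ε := by rw [abs_neg]; linarith
  · exfalso
    obtain ⟨u, hu, v, hv, _⟩ := hcover 0
    exact hne ⟨(u, v), Finset.mem_product.2 ⟨hu, hv⟩⟩


section AN
variable {c : ℝ → ℝ} {m : ℝ}

lemma Ekey (hc : Continuous c) (t u : ℝ) :
    (∫ v in (t-u)..t, c v) = (∫ v in (0:ℝ)..t, c v) - (∫ v in (0:ℝ)..(t-u), c v) :=
  (intervalIntegral.integral_interval_sub_left (hc.intervalIntegrable 0 t)
    (hc.intervalIntegrable 0 (t-u))).symm

lemma Pcont (hc : Continuous c) : Continuous (fun x => ∫ v in (0:ℝ)..x, c v) :=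
  intervalIntegral.continuous_primitive (fun a b => hc.intervalIntegrable a b) 0

lemma intC (hc : Continuous c) (hcm : ∀ t, m ≤ c t) (t u : ℝ) (hu : 0 ≤ u) :
    m * u ≤ ∫ v in (t-u)..t, c v := by
  have h1 : ∫ v in (t-u)..t, (m : ℝ) ≤ ∫ v in (t-u)..t, c v :=
    intervalIntegral.integral_mono_on (by linarith) intervalIntegrable_const
      (hc.intervalIntegrable _ _) (fun x _ => hcm x)
  rw [intervalIntegral.integral_const] at h1
  have : (t - (t - u)) • m = m * u := by simp [smul_eq_mul]; ring
  linarith [this ▸ h1]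

lemma E_le (hc : Continuous c) (hcm : ∀ t, m ≤ c t) (t u : ℝ) (hu : 0 ≤ u) :
    Real.exp (-∫ v in (t-u)..t, c v) ≤ Real.exp (-(m*u)) :=
  Real.exp_le_exp.2 (neg_le_neg (intC hc hcm t u hu))

lemma exp_bound_int (hm : 0 < m) :
    IntegrableOn (fun u => Real.exp (-(m*u))) (Set.Ici (0:ℝ)) := by
  rw [integrableOn_Ici_iff_integrableOn_Ioi]
  have := exp_neg_integrableOn_Ioi 0 hm
  simpa [neg_mul] using this

lemma poly_exp_bound (hm : 0 < m) {u : ℝ} (hu : 0 ≤ u) :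
    u * Real.exp (-(m*u)) ≤ (2/m) * Real.exp (-(m/2*u)) := by
  have h1 : m/2*u ≤ Real.exp (m/2*u) := by
    have := Real.add_one_le_exp (m/2*u); linarith
  have h2 : u ≤ (2/m) * Real.exp (m/2*u) := by
    have h3 := mul_le_mul_of_nonneg_left h1 (show (0:ℝ) ≤ 2/m by positivity)
    have h4 : (2/m) * (m/2*u) = u := by field_simp
    linarith
  calc u * Real.exp (-(m*u)) ≤ ((2/m) * Real.exp (m/2*u)) * Real.exp (-(m*u)) := by
        apply mul_le_mul_of_nonneg_right h2 (Real.exp_nonneg _)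
    _ = (2/m) * Real.exp (-(m/2*u)) := by
        rw [mul_assoc, ← Real.exp_add]; ring_nf

lemma poly_exp_int (hm : 0 < m) {A B : ℝ} (hA : 0 ≤ A) (hB : 0 ≤ B) :
    IntegrableOn (fun u => (A*u + B) * Real.exp (-(m*u))) (Set.Ici (0:ℝ)) := by
  have hb : IntegrableOn (fun u => (A*(2/m) + B) * Real.exp (-(m/2*u))) (Set.Ici (0:ℝ)) := by
    rw [integrableOn_Ici_iff_integrableOn_Ioi]
    have := (exp_neg_integrableOn_Ioi 0 (show 0 < m/2 by linarith)).const_mul (A*(2/m) + B)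
    simp only [neg_mul] at this; exact this
  apply Integrable.mono' hb
  · apply Continuous.aestronglyMeasurable
    continuity
  · filter_upwards [ae_restrict_mem measurableSet_Ici] with u hu
    have hu : (0:ℝ) ≤ u := hu
    rw [Real.norm_eq_abs, abs_of_nonneg (by positivity)]
    have h1 := poly_exp_bound hm hu
    have h2 : B * Real.exp (-(m*u)) ≤ B * Real.exp (-(m/2*u)) := by
      apply mul_le_mul_of_nonneg_left _ hB
      apply Real.exp_le_exp.2; nlinarith
    nlinarith [Real.exp_nonneg (-(m*u)), Real.exp_nonneg (-(m/2*u)),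
      mul_le_mul_of_nonneg_left h1 hA]

lemma Econt_u (hc : Continuous c) {h : ℝ → ℝ} (hcont : Continuous h) (t : ℝ) :
    Continuous (fun u => Real.exp (-∫ v in (t-u)..t, c v) * h (t-u)) := by
  have h1 : Continuous (fun u : ℝ => t - u) := continuous_const.sub continuous_id
  have h2 : Continuous (fun u : ℝ => ∫ v in (t-u)..t, c v) := by
    simp only [Ekey hc]
    exact continuous_const.sub ((Pcont hc).comp h1)
  exact (h2.neg.rexp).mul (hcont.comp h1)

lemma Econt_t (hc : Continuous c) {h : ℝ → ℝ} (hcont : Continuous h) (u : ℝ) :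
    Continuous (fun t => Real.exp (-∫ v in (t-u)..t, c v) * h (t-u)) := by
  have h1 : Continuous (fun t : ℝ => t - u) := continuous_id.sub continuous_const
  have h2 : Continuous (fun t : ℝ => ∫ v in (t-u)..t, c v) := by
    simp only [Ekey hc]
    exact (Pcont hc).sub ((Pcont hc).comp h1)
  exact (h2.neg.rexp).mul (hcont.comp h1)

lemma integ (hc : Continuous c) (hm : 0 < m) (hcm : ∀ t, m ≤ c t)
    {h : ℝ → ℝ} (hcont : Continuous h) {C : ℝ} (hC : ∀ s, |h s| ≤ C) (t : ℝ) :
    IntegrableOn (fun u => Real.exp (-∫ v in (t-u)..t, c v) * h (t-u)) (Set.Ici 0) := by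
  apply Integrable.mono' ((exp_bound_int hm).const_mul C)
  · exact (Econt_u hc hcont t).aestronglyMeasurable
  · filter_upwards [ae_restrict_mem measurableSet_Ici] with u hu
    have hu : (0:ℝ) ≤ u := hu
    rw [Real.norm_eq_abs, abs_mul, abs_of_nonneg (Real.exp_nonneg _)]
    calc Real.exp (-∫ v in (t-u)..t, c v) * |h (t-u)|
        ≤ Real.exp (-(m*u)) * C := by
          apply mul_le_mul (E_le hc hcm t u hu) (hC _) (abs_nonneg _) (Real.exp_nonneg _)
      _ = C * Real.exp (-(m*u)) := mul_comm _ _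

lemma exp_lip {a b μ : ℝ} (ha : μ ≤ a) (hb : μ ≤ b) :
    |Real.exp (-a) - Real.exp (-b)| ≤ Real.exp (-μ) * |a - b| := by
  wlog hab : b ≤ a generalizing a b
  · rw [abs_sub_comm, abs_sub_comm a b]; exact this hb ha (le_of_not_ge hab)
  have h0 : Real.exp (-a) ≤ Real.exp (-b) := Real.exp_le_exp.2 (by linarith)
  rw [abs_of_nonpos (by linarith), abs_of_nonneg (by linarith)]
  have h1 : Real.exp (-b) - Real.exp (-a) = Real.exp (-b) * (1 - Real.exp (-(a-b))) := by
    rw [mul_sub, mul_one, ← Real.exp_add]; ring_nf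
  have h2 : 1 - Real.exp (-(a-b)) ≤ a - b := by
    have := Real.add_one_le_exp (-(a-b)); linarith
  have h2' : 0 ≤ 1 - Real.exp (-(a-b)) := by
    have : Real.exp (-(a-b)) ≤ 1 := Real.exp_le_one_iff.2 (by linarith)
    linarith
  have h3 : Real.exp (-b) ≤ Real.exp (-μ) := Real.exp_le_exp.2 (by linarith)
  calc -(Real.exp (-a) - Real.exp (-b)) = Real.exp (-b) * (1 - Real.exp (-(a-b))) := by
        rw [← h1]; ring
    _ ≤ Real.exp (-μ) * (a - b) :=
        mul_le_mul h3 h2 h2' (Real.exp_nonneg _)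

lemma Ediff (hc : Continuous c) (hcm : ∀ t, m ≤ c t) {ε : ℝ} (hε : 0 ≤ ε)
    {τ : ℝ} (hτ : ∀ s, |c (s + τ) - c s| ≤ ε) (t u : ℝ) (hu : 0 ≤ u) :
    |Real.exp (-∫ v in (t+τ-u)..(t+τ), c v) - Real.exp (-∫ v in (t-u)..t, c v)|
      ≤ ε * u * Real.exp (-(m*u)) := by
  set A := ∫ v in (t+τ-u)..(t+τ), c v with hA
  set B := ∫ v in (t-u)..t, c v with hB
  have hAm : m * u ≤ A := intC hc hcm (t+τ) u hu
  have hBm : m * u ≤ B := intC hc hcm t u hu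
  have hcτ : Continuous (fun v => c (v + τ)) := hc.comp (continuous_id.add continuous_const)
  have h1 : (∫ v in (t-u)..t, c (v + τ)) = A := by
    rw [intervalIntegral.integral_comp_add_right c τ, hA]
    norm_num
    rw [show t - u + τ = t + τ - u by ring]
  have h2 : A - B = ∫ v in (t-u)..t, (c (v+τ) - c v) := by
    rw [← h1, hB, intervalIntegral.integral_sub (hcτ.intervalIntegrable _ _)
      (hc.intervalIntegrable _ _)]
  have h3 : |A - B| ≤ ε * u := by
    rw [h2]
    have h4 := intervalIntegral.norm_integral_le_of_norm_le_const
      (f := fun v => c (v+τ) - c v) (a := t-u) (b := t) (C := ε)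
      (fun x _ => by rw [Real.norm_eq_abs]; exact hτ x)
    rw [Real.norm_eq_abs] at h4
    calc |∫ v in (t-u)..t, (c (v+τ) - c v)| ≤ ε * |t - (t-u)| := h4
      _ = ε * u := by rw [show t - (t-u) = u by ring, abs_of_nonneg hu]
  calc |Real.exp (-A) - Real.exp (-B)| ≤ Real.exp (-(m*u)) * |A - B| := exp_lip hAm hBm
    _ ≤ Real.exp (-(m*u)) * (ε * u) := by
        exact mul_le_mul_of_nonneg_left h3 (Real.exp_nonneg _)
    _ = ε * u * Real.exp (-(m*u)) := by ring

lemma Xcont (hc : Continuous c) (hm : 0 < m) (hcm : ∀ t, m ≤ c t)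
    {h : ℝ → ℝ} (hcont : Continuous h) {C : ℝ} (hC : ∀ s, |h s| ≤ C) :
    Continuous (fun t => ∫ u in Set.Ici (0:ℝ),
      Real.exp (-∫ v in (t-u)..t, c v) * h (t-u)) := by
  apply MeasureTheory.continuous_of_dominated
    (bound := fun u => C * Real.exp (-(m*u)))
  · exact fun t => (Econt_u hc hcont t).aestronglyMeasurable
  · intro t
    filter_upwards [ae_restrict_mem measurableSet_Ici] with u hu
    have hu : (0:ℝ) ≤ u := hu
    rw [Real.norm_eq_abs, abs_mul, abs_of_nonneg (Real.exp_nonneg _)]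
    calc Real.exp (-∫ v in (t-u)..t, c v) * |h (t-u)|
        ≤ Real.exp (-(m*u)) * C :=
          mul_le_mul (E_le hc hcm t u hu) (hC _) (abs_nonneg _) (Real.exp_nonneg _)
      _ = C * Real.exp (-(m*u)) := mul_comm _ _
  · exact (exp_bound_int hm).const_mul C
  · exact Filter.Eventually.of_forall (fun u => Econt_t hc hcont u)

lemma Xsubst (t : ℝ) (F : ℝ → ℝ) :
    ∫ s in Set.Iic t, F s = ∫ u in Set.Ici (0:ℝ), F (t - u) := by
  have hemb : MeasurableEmbedding (fun u : ℝ => t - u) :=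
    (Homeomorph.subLeft t).measurableEmbedding
  have hmap : Measure.map (fun u : ℝ => t - u) volume = volume :=
    (Measure.measurePreserving_sub_left volume t).map_eq
  have := hemb.setIntegral_map (μ := volume) F (Set.Iic t)
  rw [hmap] at this
  rw [this]
  congr 1
  ext u
  simp [sub_le_iff_le_add]

end AN

section MAIN
variable {c : ℝ → ℝ} {m : ℝ}

lemma X_ap (hc : Continuous c) (hm : 0 < m) (hcm : ∀ t, m ≤ c t)
    (hcap : AlmostPeriodic c) {g : ℝ → ℝ} (hg : AlmostPeriodic g) :
    AlmostPeriodic (fun t => ∫ u in Set.Ici (0:ℝ),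
      Real.exp (-∫ v in (t-u)..t, c v) * g (t-u)) := by
  obtain ⟨Cg, hCg0, hCg⟩ := ap_bounded hg
  refine ⟨Xcont hc hm hcm hg.1 hCg, fun ε hε => ?_⟩
  set κ := ∫ u in Set.Ici (0:ℝ), (Cg*u + 1) * Real.exp (-(m*u)) with hκ
  have hκ0 : 0 ≤ κ := setIntegral_nonneg measurableSet_Ici (fun u hu => by
    have hu' : (0:ℝ) ≤ u := hu
    have : 0 ≤ Cg * u + 1 := by nlinarith
    positivity)
  set ε' := ε / (κ + 1) with hε'def
  have hε'pos : 0 < ε' := div_pos hε (by linarith)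
  obtain ⟨l, hl, hT⟩ := ap_common hcap hg hε'pos
  refine ⟨l, hl, fun a => ?_⟩
  obtain ⟨τ, hτmem, hτc, hτg⟩ := hT a
  refine ⟨τ, hτmem, fun t => ?_⟩
  show |(∫ u in Set.Ici (0:ℝ), Real.exp (-∫ v in (t+τ-u)..(t+τ), c v) * g (t+τ-u)) -
    (∫ u in Set.Ici (0:ℝ), Real.exp (-∫ v in (t-u)..t, c v) * g (t-u))| < ε
  have hint1 := integ hc hm hcm hg.1 hCg (t+τ)
  have hint2 := integ hc hm hcm hg.1 hCg t
  rw [← MeasureTheory.integral_sub hint1 hint2]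
  have hbint : Integrable (fun u => ε' * ((Cg*u + 1) * Real.exp (-(m*u))))
      (volume.restrict (Set.Ici (0:ℝ))) :=
    (poly_exp_int hm hCg0 zero_le_one).const_mul ε'
  have hbound : ‖∫ u in Set.Ici (0:ℝ),
      (Real.exp (-∫ v in (t+τ-u)..(t+τ), c v) * g (t+τ-u) -
       Real.exp (-∫ v in (t-u)..t, c v) * g (t-u))‖
      ≤ ∫ u in Set.Ici (0:ℝ), ε' * ((Cg*u + 1) * Real.exp (-(m*u))) := by
    apply MeasureTheory.norm_integral_le_of_norm_le hbint
    filter_upwards [ae_restrict_mem measurableSet_Ici] with u hu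
    have hu' : (0:ℝ) ≤ u := hu
    set E1 := Real.exp (-∫ v in (t+τ-u)..(t+τ), c v) with hE1
    set E2 := Real.exp (-∫ v in (t-u)..t, c v) with hE2
    have hdiff : |E1 - E2| ≤ ε' * u * Real.exp (-(m*u)) :=
      Ediff hc hcm hε'pos.le hτc t u hu'
    have hgd : |g (t+τ-u) - g (t-u)| ≤ ε' := by
      have := hτg (t-u)
      rwa [show t - u + τ = t + τ - u by ring] at this
    have hE2le : E2 ≤ Real.exp (-(m*u)) := E_le hc hcm t u hu'
    have heq : E1 * g (t+τ-u) - E2 * g (t-u)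
        = (E1 - E2) * g (t+τ-u) + E2 * (g (t+τ-u) - g (t-u)) := by ring
    rw [Real.norm_eq_abs, heq]
    calc |(E1 - E2) * g (t+τ-u) + E2 * (g (t+τ-u) - g (t-u))|
        ≤ |(E1 - E2) * g (t+τ-u)| + |E2 * (g (t+τ-u) - g (t-u))| := abs_add_le _ _
      _ = |E1 - E2| * |g (t+τ-u)| + E2 * |g (t+τ-u) - g (t-u)| := by
          rw [abs_mul, abs_mul, abs_of_nonneg (Real.exp_nonneg _)]
      _ ≤ (ε' * u * Real.exp (-(m*u))) * Cg + Real.exp (-(m*u)) * ε' := by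
          have t1 : |E1 - E2| * |g (t+τ-u)| ≤ (ε' * u * Real.exp (-(m*u))) * Cg :=
            mul_le_mul hdiff (hCg _) (abs_nonneg _) (by positivity)
          have t2 : E2 * |g (t+τ-u) - g (t-u)| ≤ Real.exp (-(m*u)) * ε' :=
            mul_le_mul hE2le hgd (abs_nonneg _) (Real.exp_nonneg _)
          linarith
      _ = ε' * ((Cg*u + 1) * Real.exp (-(m*u))) := by ring
  rw [MeasureTheory.integral_const_mul] at hbound
  rw [Real.norm_eq_abs] at hbound
  calc |∫ u in Set.Ici (0:ℝ), (Real.exp (-∫ v in (t+τ-u)..(t+τ), c v) * g (t+τ-u) -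
       Real.exp (-∫ v in (t-u)..t, c v) * g (t-u))| ≤ ε' * κ := hbound
    _ < ε' * (κ + 1) := by
        exact mul_lt_mul_of_pos_left (by linarith) hε'pos
    _ = ε := by
        rw [hε'def]; field_simp

end MAIN

section PAP
variable {c : ℝ → ℝ} {m : ℝ}

lemma X_pap (hc : Continuous c) (hm : 0 < m) (hcm : ∀ t, m ≤ c t)
    {φ : ℝ → ℝ} (hφ : PAPZero φ) :
    PAPZero (fun t => ∫ u in Set.Ici (0:ℝ),
      Real.exp (-∫ v in (t-u)..t, c v) * φ (t-u)) := by
  obtain ⟨⟨Cφ, hCφ⟩, hφc, hφ0⟩ := hφ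
  have hCφ0 : 0 ≤ Cφ := le_trans (abs_nonneg _) (hCφ 0)
  set X : ℝ → ℝ := fun t => ∫ u in Set.Ici (0:ℝ),
    Real.exp (-∫ v in (t-u)..t, c v) * φ (t-u) with hX
  have hXcont : Continuous X := Xcont hc hm hcm hφc hCφ
  have habs : ∀ t : ℝ, IntegrableOn (fun u => Real.exp (-(m*u)) * |φ (t-u)|) (Set.Ici 0) := by
    intro t
    apply Integrable.mono' ((exp_bound_int hm).const_mul Cφ)
    · exact (((continuous_const.mul continuous_id).neg.rexp).mul
        ((hφc.abs).comp (continuous_const.sub continuous_id))).aestronglyMeasurable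
    · filter_upwards with u
      rw [Real.norm_eq_abs, abs_mul, abs_of_nonneg (Real.exp_nonneg _), abs_abs]
      calc Real.exp (-(m*u)) * |φ (t-u)| ≤ Real.exp (-(m*u)) * Cφ :=
            mul_le_mul_of_nonneg_left (hCφ _) (Real.exp_nonneg _)
        _ = Cφ * Real.exp (-(m*u)) := mul_comm _ _
  have hXJ : ∀ t, |X t| ≤ ∫ u in Set.Ici (0:ℝ), Real.exp (-(m*u)) * |φ (t-u)| := by
    intro t
    rw [hX, ← Real.norm_eq_abs]
    apply MeasureTheory.norm_integral_le_of_norm_le (habs t)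
    filter_upwards [ae_restrict_mem measurableSet_Ici] with u hu
    have hu' : (0:ℝ) ≤ u := hu
    rw [Real.norm_eq_abs, abs_mul, abs_of_nonneg (Real.exp_nonneg _)]
    exact mul_le_mul_of_nonneg_right (E_le hc hcm t u hu') (abs_nonneg _)
  refine ⟨⟨Cφ * ∫ u in Set.Ici (0:ℝ), Real.exp (-(m*u)), fun t => ?_⟩, hXcont, ?_⟩
  · refine le_trans (hXJ t) ?_
    have h1 : ∫ u in Set.Ici (0:ℝ), Real.exp (-(m*u)) * |φ (t-u)|
        ≤ ∫ u in Set.Ici (0:ℝ), Real.exp (-(m*u)) * Cφ := by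
      apply setIntegral_mono_on (habs t) ((exp_bound_int hm).mul_const Cφ) measurableSet_Ici
      intro u _
      exact mul_le_mul_of_nonneg_left (hCφ _) (Real.exp_nonneg _)
    rw [integral_mul_const] at h1
    calc ∫ u in Set.Ici (0:ℝ), Real.exp (-(m*u)) * |φ (t-u)|
        ≤ (∫ u in Set.Ici (0:ℝ), Real.exp (-(m*u))) * Cφ := h1
      _ = Cφ * ∫ u in Set.Ici (0:ℝ), Real.exp (-(m*u)) := mul_comm _ _
  · rw [NormedAddCommGroup.tendsto_nhds_zero]
    intro ε hε
    set κ₂ := ∫ u in Set.Ici (0:ℝ), (1*u + 1) * Real.exp (-(m*u)) with hκ₂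
    have hκ₂0 : 0 ≤ κ₂ := setIntegral_nonneg measurableSet_Ici (fun u hu => by
      have hu' : (0:ℝ) ≤ u := hu; positivity)
    set ε' := ε / (κ₂ + 1) with hε'def
    have hε'pos : 0 < ε' := div_pos hε (by linarith)
    have hev := (NormedAddCommGroup.tendsto_nhds_zero.1 hφ0) ε' hε'pos
    obtain ⟨R₀, hR₀⟩ := Filter.eventually_atTop.1 hev
    filter_upwards [Filter.eventually_ge_atTop (max R₀ 1)] with r hr
    have hr1 : (1:ℝ) ≤ r := le_trans (le_max_right _ _) hr
    have hrR : R₀ ≤ r := le_trans (le_max_left _ _) hr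
    have hr0 : (0:ℝ) < r := lt_of_lt_of_le one_pos hr1
    have hinner : ∀ u : ℝ, 0 ≤ u →
        (∫ s in Set.Ioc (-r) r, |φ (s - u)|) ≤ 2*(r+u)*ε' := by
      intro u hu
      have hemb : MeasurableEmbedding (fun s : ℝ => s - u) :=
        (Homeomorph.subRight u).measurableEmbedding
      have hmap : Measure.map (fun s : ℝ => s - u) volume = volume := by
        simp only [sub_eq_add_neg]
        exact (measurePreserving_add_right volume (-u)).map_eq
      have htrans : ∫ s in Set.Ioc (-(r+u)) (r-u), |φ s|
          = ∫ s in Set.Ioc (-r) r, |φ (s-u)| := by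
        have h1 := hemb.setIntegral_map (μ := volume) (fun s => |φ s|)
          (Set.Ioc (-(r+u)) (r-u))
        rw [hmap] at h1
        have hpre : (fun s : ℝ => s - u) ⁻¹' Set.Ioc (-(r+u)) (r-u) = Set.Ioc (-r) r := by
          ext s
          simp only [Set.mem_preimage, Set.mem_Ioc]
          constructor
          · rintro ⟨h1', h2'⟩; constructor <;> linarith
          · rintro ⟨h1', h2'⟩; constructor <;> linarith
        rw [h1, hpre]
      rw [← htrans]
      have hmono : ∫ s in Set.Ioc (-(r+u)) (r-u), |φ s|
          ≤ ∫ s in Set.Ioc (-(r+u)) (r+u), |φ s| := by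
        apply setIntegral_mono_set (hφc.abs.integrableOn_Ioc)
        · filter_upwards with s using abs_nonneg _
        · exact (Set.Ioc_subset_Ioc_right (by linarith)).eventuallyLE
      have hψ := hR₀ (r+u) (by linarith)
      rw [Real.norm_eq_abs] at hψ
      have hru : (0:ℝ) < r + u := by linarith
      have hIoc : ∫ s in Set.Ioc (-(r+u)) (r+u), |φ s|
          = ∫ s in (-(r+u))..(r+u), |φ s| :=
        (intervalIntegral.integral_of_le (by linarith)).symm
      have habs2 := (abs_le.1 hψ.le).2
      have hI : ∫ s in (-(r+u))..(r+u), |φ s| ≤ 2*(r+u)*ε' := by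
        have h3 : (2*(r+u)) * ((1 / (2 * (r+u))) * ∫ s in (-(r+u))..(r+u), |φ s|)
            ≤ (2*(r+u)) * ε' := mul_le_mul_of_nonneg_left habs2 (by positivity)
        have h4 : (2*(r+u)) * ((1 / (2 * (r+u))) * ∫ s in (-(r+u))..(r+u), |φ s|)
            = ∫ s in (-(r+u))..(r+u), |φ s| := by field_simp
        linarith
      linarith [hIoc ▸ hI, hmono]
    -- product integrability and Fubini
    set F : ℝ × ℝ → ℝ := fun z => Real.exp (-(m*z.2)) * |φ (z.1 - z.2)| with hF
    have hprod : Integrable F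
        ((volume.restrict (Set.Ioc (-r) r)).prod (volume.restrict (Set.Ici 0))) := by
      apply Integrable.mono'
        (g := fun z : ℝ×ℝ => Cφ * Real.exp (-(m*z.2)))
      · exact Integrable.mul_prod (integrableOn_const (C := Cφ) measure_Ioc_lt_top.ne :
            Integrable (fun _ : ℝ => Cφ) (volume.restrict (Set.Ioc (-r) r)))
          (exp_bound_int hm)
      · apply Continuous.aestronglyMeasurable
        apply Continuous.mul
        · exact (continuous_const.mul continuous_snd).neg.rexp
        · exact (hφc.comp (continuous_fst.sub continuous_snd)).abs
      · filter_upwards with z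
        rw [hF, Real.norm_eq_abs, abs_mul, abs_of_nonneg (Real.exp_nonneg _), abs_abs]
        calc Real.exp (-(m*z.2)) * |φ (z.1-z.2)| ≤ Real.exp (-(m*z.2)) * Cφ :=
              mul_le_mul_of_nonneg_left (hCφ _) (Real.exp_nonneg _)
          _ = Cφ * Real.exp (-(m*z.2)) := mul_comm _ _
    have hswap : ∫ s in Set.Ioc (-r) r, (∫ u in Set.Ici (0:ℝ), Real.exp (-(m*u)) * |φ (s-u)|)
        = ∫ u in Set.Ici (0:ℝ), (∫ s in Set.Ioc (-r) r, Real.exp (-(m*u)) * |φ (s-u)|) :=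
      MeasureTheory.integral_integral_swap (f := fun s u => Real.exp (-(m*u)) * |φ (s-u)|) hprod
    have hstep1 : ∫ s in Set.Ioc (-r) r, |X s|
        ≤ ∫ s in Set.Ioc (-r) r, (∫ u in Set.Ici (0:ℝ), Real.exp (-(m*u)) * |φ (s-u)|) := by
      apply setIntegral_mono_on (hXcont.abs.integrableOn_Ioc)
        hprod.integral_prod_left measurableSet_Ioc
      exact fun s _ => hXJ s
    have houter : ∫ u in Set.Ici (0:ℝ), (∫ s in Set.Ioc (-r) r, Real.exp (-(m*u)) * |φ (s-u)|)
        ≤ ∫ u in Set.Ici (0:ℝ), (2*r*ε') * ((1*u+1) * Real.exp (-(m*u))) := by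
      apply setIntegral_mono_on hprod.swap.integral_prod_left
        ((poly_exp_int hm zero_le_one zero_le_one).const_mul _) measurableSet_Ici
      intro u hu
      have hu' : (0:ℝ) ≤ u := hu
      show (∫ s in Set.Ioc (-r) r, Real.exp (-(m*u)) * |φ (s-u)|)
        ≤ (2*r*ε') * ((1*u+1) * Real.exp (-(m*u)))
      rw [MeasureTheory.integral_const_mul]
      have h1 := hinner u hu'
      have h2 : Real.exp (-(m*u)) * ∫ s in Set.Ioc (-r) r, |φ (s-u)|
          ≤ Real.exp (-(m*u)) * (2*(r+u)*ε') :=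
        mul_le_mul_of_nonneg_left h1 (Real.exp_nonneg _)
      have h3 : Real.exp (-(m*u)) * (2*(r+u)*ε') ≤ (2*r*ε') * ((1*u+1) * Real.exp (-(m*u))) := by
        have h4 : 2*(r+u)*ε' ≤ (2*r*ε')*(1*u+1) := by nlinarith [mul_nonneg (mul_nonneg (sub_nonneg.2 hr1) hu') hε'pos.le]
        nlinarith [Real.exp_nonneg (-(m*u))]
      linarith
    have hRHS : ∫ u in Set.Ici (0:ℝ), (2*r*ε') * ((1*u+1) * Real.exp (-(m*u)))
        = (2*r*ε') * κ₂ := MeasureTheory.integral_const_mul _ _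
    have hchain : ∫ s in Set.Ioc (-r) r, |X s| ≤ (2*r*ε') * κ₂ := by
      calc ∫ s in Set.Ioc (-r) r, |X s|
          ≤ ∫ s in Set.Ioc (-r) r, (∫ u in Set.Ici (0:ℝ), Real.exp (-(m*u)) * |φ (s-u)|) := hstep1
        _ = ∫ u in Set.Ici (0:ℝ), (∫ s in Set.Ioc (-r) r, Real.exp (-(m*u)) * |φ (s-u)|) := hswap
        _ ≤ ∫ u in Set.Ici (0:ℝ), (2*r*ε') * ((1*u+1) * Real.exp (-(m*u))) := houter
        _ = (2*r*ε') * κ₂ := hRHS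
    have hIX : ∫ s in (-r)..r, |X s| = ∫ s in Set.Ioc (-r) r, |X s| :=
      intervalIntegral.integral_of_le (by linarith)
    have hnn : 0 ≤ ∫ s in Set.Ioc (-r) r, |X s| :=
      setIntegral_nonneg measurableSet_Ioc (fun s _ => abs_nonneg _)
    rw [Real.norm_eq_abs]
    rw [show (fun s => |X s|) = fun s => |X s| from rfl]
    rw [hIX, abs_of_nonneg (by positivity)]
    calc (1/(2*r)) * ∫ s in Set.Ioc (-r) r, |X s|
        ≤ (1/(2*r)) * ((2*r*ε') * κ₂) := by
          apply mul_le_mul_of_nonneg_left hchain (by positivity)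
      _ = ε' * κ₂ := by field_simp
      _ < ε' * (κ₂ + 1) := mul_lt_mul_of_pos_left (by linarith) hε'pos
      _ = ε := by rw [hε'def]; field_simp

end PAP


/-- If `c : ℝ → ℝ` is continuous, almost periodic, with `inf c > 0`,
and `f` is pseudo almost periodic, then the unique bounded solution
`x t = ∫_{-∞}^{t} exp(-∫_s^t c) · f s ds` of `x' = -c(t) x + f(t)` is pseudo almost
periodic. -/
theorem stmt12 (c f : ℝ → ℝ) (hc : Continuous c) (hcap : AlmostPeriodic c)
    (hcinf : 0 < ⨅ t : ℝ, c t) (hf : PseudoAlmostPeriodic f) :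
    PseudoAlmostPeriodic
      (fun t : ℝ => ∫ s in Set.Iic t, Real.exp (-∫ u in s..t, c u) * f s) := by
  have hcm : ∀ t, (⨅ s : ℝ, c s) ≤ c t := by
    intro t
    by_cases hb : BddBelow (Set.range c)
    · exact ciInf_le hb t
    · rw [Real.iInf_of_not_bddBelow hb] at hcinf
      exact absurd hcinf (lt_irrefl 0)
  obtain ⟨g, φ, hg, hφ, hfeq⟩ := hf
  obtain ⟨Cg, hCg0, hCg⟩ := ap_bounded hg
  obtain ⟨Cφ, hCφ⟩ := hφ.1
  refine ⟨(fun t => ∫ u in Set.Ici (0:ℝ), Real.exp (-∫ v in (t-u)..t, c v) * g (t-u)),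
       (fun t => ∫ u in Set.Ici (0:ℝ), Real.exp (-∫ v in (t-u)..t, c v) * φ (t-u)),
       X_ap hc hcinf hcm hcap hg, X_pap hc hcinf hcm hφ, ?_⟩
  funext t
  show (∫ s in Set.Iic t, Real.exp (-∫ u in s..t, c u) * f s) = _
  rw [Xsubst t (fun s => Real.exp (-∫ u in s..t, c u) * f s)]
  have hfeq' : ∀ s, f s = g s + φ s := fun s => by rw [hfeq]; rfl
  simp only [hfeq', mul_add]
  rw [MeasureTheory.integral_add (integ hc hcinf hcm hg.1 hCg t)
    (integ hc hcinf hcm hφ.2.1 hCφ t)]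
  rfl
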